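/- Product Ramsey theorem: for every n ≥ 1 and all natural numbers j₁,…,jₙ, c, r with c ≠ 0, there exists a natural number R such that for all finite sets S₁,…,Sₙ with |Sᵢ| ≥ R for each i = 1,…,n and all sets Y₁,…,Y_c, if [S₁]^{j₁} × ⋯ × [Sₙ]^{jₙ} = Y₁ ∪ ⋯ ∪ Y_c, then for each i = 1,…,n there exists Tᵢ ∈ [Sᵢ]^r such that [T₁]^{j₁} × ⋯ × [Tₙ]^{jₙ} ⊆ Y_d for some d ∈ {1,…,c}. -/

import Mathlib

open Set

universe u v

open Finset in
/-- Hypergraph Ramsey theorem over `ℕ`. -/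
lemma ramseyNat (k : ℕ) (γ : Type v) [Fintype γ] (m : ℕ) :
    ∃ N : ℕ, ∀ (s : Finset ℕ) (f : Finset ℕ → γ), N ≤ s.card →
      ∃ t, t ⊆ s ∧ t.card = m ∧ ∃ d : γ, ∀ u, u ⊆ t → u.card = k → f u = d := by
  induction k generalizing m with
  | zero =>
    refine ⟨m, fun s f hs => ?_⟩
    obtain ⟨t, hts, htc⟩ := exists_subset_card_eq hs
    exact ⟨t, hts, htc, f ∅, fun u _ hu => by rw [card_eq_zero.1 hu]⟩
  | succ k IH =>
    classical
    -- auxiliary: pre-homogeneous sets of any size L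
    have aux : ∀ L : ℕ, ∃ N : ℕ, ∀ (s : Finset ℕ) (f : Finset ℕ → γ), N ≤ s.card →
        ∃ t, t ⊆ s ∧ t.card = L ∧ ∃ col : ℕ → γ,
          ∀ w, w ⊆ t → ∀ hw : w.Nonempty, w.card = k + 1 → f w = col (w.min' hw) := by
      intro L
      induction L with
      | zero =>
        refine ⟨0, fun s f _ => ⟨∅, empty_subset _, card_empty, fun _ => f ∅, ?_⟩⟩
        intro w hw hwne hwc
        simp [subset_empty.1 hw] at hwne
      | succ L IHL =>
        obtain ⟨N, hN⟩ := IHL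
        obtain ⟨M, hM⟩ := IH N
        refine ⟨M + 1, fun s f hs => ?_⟩
        have hsne : s.Nonempty := card_pos.1 (lt_of_lt_of_le (Nat.succ_pos M) hs)
        set v := s.min' hsne with hv
        have hvs : v ∈ s := s.min'_mem hsne
        have hec : M ≤ (s.erase v).card := by
          rw [card_erase_of_mem hvs]; omega
        obtain ⟨A, hAs, hAc, d, hd⟩ := hM (s.erase v) (fun u => f (insert v u)) hec
        obtain ⟨t', ht'A, ht'c, col', hcol'⟩ := hN A f (le_of_eq hAc.symm)
        have hvnt' : v ∉ t' := fun h => (mem_erase.1 (hAs (ht'A h))).1 rfl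
        refine ⟨insert v t', ?_, ?_, fun x => if x = v then d else col' x, ?_⟩
        · exact insert_subset hvs (ht'A.trans (hAs.trans (erase_subset _ _)))
        · rw [card_insert_of_notMem hvnt', ht'c]
        · intro w hw hwne hwc
          by_cases hvw : v ∈ w
          · have hminw : w.min' hwne = v := by
              refine le_antisymm (min'_le _ _ hvw) (le_min' _ _ _ fun y hy => ?_)
              rcases mem_insert.1 (hw hy) with h | h
              · omega
              · exact s.min'_le y ((erase_subset _ _) (hAs (ht'A h)))
            have hwe : w.erase v ⊆ A := by
              intro x hx
              rcases mem_insert.1 (hw (erase_subset _ _ hx)) with h | h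
              · exact absurd h (mem_erase.1 hx).1
              · exact ht'A h
            have : f (insert v (w.erase v)) = d :=
              hd _ hwe (by simp [card_erase_of_mem hvw, hwc])
            rw [insert_erase hvw] at this
            simp [hminw, this]
          · have hwt' : w ⊆ t' := fun x hx =>
              (mem_insert.1 (hw hx)).resolve_left (fun h => hvw (h ▸ hx))
            have hne : w.min' hwne ≠ v := fun h => hvw (h ▸ w.min'_mem hwne)
            simp [hcol' w hwt' hwne hwc, hne]
    obtain ⟨N, hN⟩ := aux (Fintype.card γ * m)
    refine ⟨N, fun s f hs => ?_⟩
    obtain ⟨t, hts, htc, col, hcol⟩ := hN s f hs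
    have hγ : Nonempty γ := ⟨f ∅⟩
    have huniv : (Finset.univ : Finset γ).Nonempty := univ_nonempty
    obtain ⟨d, _, hd⟩ := exists_le_card_fiber_of_mul_le_card_of_maps_to
      (f := col) (s := t) (t := (univ : Finset γ)) (fun a _ => mem_univ _) huniv
      (by rw [card_univ, htc])
    obtain ⟨T, hTf, hTc⟩ := exists_subset_card_eq hd
    have hTt : T ⊆ t := hTf.trans (filter_subset _ _)
    refine ⟨T, hTt.trans hts, hTc, d, fun u hu huc => ?_⟩
    have hune : u.Nonempty := card_pos.1 (by omega)
    rw [hcol u (hu.trans hTt) hune huc]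
    have := hTf (u.min'_mem hune |> hu)
    exact (mem_filter.1 this).2

open Finset in
/-- Hypergraph Ramsey for an arbitrary ground type. -/
lemma ramseyFinset (k : ℕ) (γ : Type v) [Fintype γ] (m : ℕ) :
    ∃ N : ℕ, ∀ {α : Type u} (s : Finset α) (f : Finset α → γ), N ≤ s.card →
      ∃ t, t ⊆ s ∧ t.card = m ∧ ∃ d : γ, ∀ u, u ⊆ t → u.card = k → f u = d := by
  classical
  obtain ⟨N, hN⟩ := ramseyNat k γ m
  refine ⟨N, fun {α} s f hs => ?_⟩
  rcases s.eq_empty_or_nonempty with rfl | hsne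
  · simp only [Finset.card_empty, Nat.le_zero] at hs
    obtain ⟨t', ht', htc', d, hd⟩ := hN (Finset.range 0) (fun _ => f ∅) (by simp [hs])
    simp only [Finset.range_zero, subset_empty] at ht'
    subst ht'
    refine ⟨∅, subset_rfl, htc', f ∅, fun u hu huc => ?_⟩
    rw [subset_empty.1 hu]
  · obtain ⟨x₀, hx₀⟩ := hsne
    set e := s.equivFin
    set ψ : ℕ → α := fun n => if h : n < s.card then (e.symm ⟨n, h⟩ : α) else x₀ with hψ
    have hψs : ∀ n, ψ n ∈ s := by
      intro n; by_cases h : n < s.card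
      · simp only [hψ, dif_pos h]; exact (e.symm ⟨n, h⟩).2
      · simp only [hψ, dif_neg h]; exact hx₀
    have hψinj : Set.InjOn ψ (Finset.range s.card) := by
      intro a ha b hb hab
      simp only [Finset.coe_range, Set.mem_Iio] at ha hb
      simp only [hψ, dif_pos ha, dif_pos hb] at hab
      have h2 := e.symm.injective (Subtype.ext hab)
      exact congrArg Fin.val h2
    obtain ⟨t', ht's, ht'c, d, hd⟩ := hN (Finset.range s.card) (fun u => f (u.image ψ))
      (by simpa using hs)
    refine ⟨t'.image ψ, ?_, ?_, d, ?_⟩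
    · intro x hx; obtain ⟨n, _, rfl⟩ := mem_image.1 hx; exact hψs n
    · rw [card_image_of_injOn (hψinj.mono (by exact_mod_cast ht's)), ht'c]
    · intro u hu huc
      obtain ⟨u', hu', rfl⟩ := (Finset.subset_image_iff).1 hu
      have hinj : Set.InjOn ψ u' := hψinj.mono ((hu'.trans ht's) : (u' : Finset ℕ) ⊆ _)
      exact hd u' hu' (by rwa [card_image_of_injOn hinj] at huc)

/-- Hypergraph Ramsey, with number `N` depending only on a bound for the number of colors. -/
lemma ramseyCardBound (k C m : ℕ) :
    ∃ N : ℕ, ∀ {α : Type u} {γ : Type v} [Fintype γ], Fintype.card γ ≤ C →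
      ∀ (s : Finset α) (f : Finset α → γ), N ≤ s.card →
      ∃ t, t ⊆ s ∧ t.card = m ∧ ∃ d : γ, ∀ u, u ⊆ t → u.card = k → f u = d := by
  classical
  obtain ⟨N, hN⟩ := ramseyFinset.{u} k (Fin C) m
  refine ⟨N, fun {α γ} _ hC s f hs => ?_⟩
  obtain ⟨ι⟩ : Nonempty (γ ↪ Fin C) :=
    Function.Embedding.nonempty_of_card_le (by simpa using hC)
  obtain ⟨t, hts, htc, d', hd'⟩ := hN s (fun u => ι (f u)) hs
  by_cases h : ∃ u, u ⊆ t ∧ u.card = k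
  · obtain ⟨u₀, hu₀, hu₀c⟩ := h
    refine ⟨t, hts, htc, f u₀, fun u hu huc => ι.injective ?_⟩
    rw [hd' u hu huc, hd' u₀ hu₀ hu₀c]
  · exact ⟨t, hts, htc, f ∅, fun u hu huc => absurd ⟨u, hu, huc⟩ h⟩

open Finset in
/-- Product Ramsey theorem, Finset version. -/
lemma prodRamseyFinset (n : ℕ) : ∀ (j : Fin n → ℕ) (c r : ℕ), c ≠ 0 →
    ∃ R : ℕ, ∀ {β : Type u} (S : Fin n → Finset β)
      (χ : (Fin n → Finset β) → Fin c), (∀ i, R ≤ (S i).card) →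
      ∃ T : Fin n → Finset β, (∀ i, T i ⊆ S i ∧ (T i).card = r) ∧
        ∃ d : Fin c, ∀ t : Fin n → Finset β,
          (∀ i, t i ⊆ T i ∧ (t i).card = j i) → χ t = d := by
  classical
  induction n with
  | zero =>
    intro j c r hc
    refine ⟨0, fun {β} S χ _ => ⟨fun i => i.elim0, fun i => i.elim0, χ (fun i => i.elim0),
      fun t _ => ?_⟩⟩
    have : t = fun i => i.elim0 := funext fun i => i.elim0
    rw [this]
  | succ n IH =>
    intro j c r hc
    have hcpos : 0 < c := Nat.pos_of_ne_zero hc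
    by_cases hjr : j (Fin.last n) ≤ r
    · -- main case
      obtain ⟨R₀, hR₀⟩ := IH (fun i => j i.castSucc) c r hc
      obtain ⟨N₁, hN₁⟩ := ramseyCardBound.{u, u} (j (Fin.last n)) (c ^ ((2 ^ R₀) ^ n)) r
      refine ⟨max R₀ N₁, fun {β} S χ hS => ?_⟩
      -- shrink the first n coordinates to exactly R₀
      have hpick : ∀ i : Fin n, ∃ s, s ⊆ S i.castSucc ∧ s.card = R₀ :=
        fun i => exists_subset_card_eq ((le_max_left _ _).trans (hS i.castSucc))
      choose S' hS'sub hS'card using hpick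
      -- color type
      have hcardγ : Fintype.card (((i : Fin n) → {A : Finset β // A ∈ (S' i).powerset}) → Fin c)
          ≤ c ^ ((2 ^ R₀) ^ n) := by
        apply le_of_eq
        rw [Fintype.card_fun, Fintype.card_fin]
        congr 1
        rw [Fintype.card_pi]
        calc ∏ i : Fin n, Fintype.card {A : Finset β // A ∈ (S' i).powerset}
            = ∏ _i : Fin n, 2 ^ R₀ :=
              Finset.prod_congr rfl fun i _ => by
                rw [Fintype.card_coe, card_powerset, hS'card]
          _ = (2 ^ R₀) ^ n := by rw [Finset.prod_const, card_univ, Fintype.card_fin]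
      -- coloring of the last coordinate
      set F : Finset β → (((i : Fin n) → {A : Finset β // A ∈ (S' i).powerset}) → Fin c) :=
        fun A p => χ (Fin.snoc (fun i => (p i).1) A) with hF
      obtain ⟨Tl, hTlsub, hTlcard, g₀, hg₀⟩ :=
        hN₁ hcardγ (S (Fin.last n)) F ((le_max_right _ _).trans (hS (Fin.last n)))
      -- induced coloring of the first n coordinates
      set χ' : (Fin n → Finset β) → Fin c := fun t =>
        if h : ∀ i, t i ∈ (S' i).powerset then g₀ (fun i => ⟨t i, h i⟩) else ⟨0, hcpos⟩
        with hχ'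
      obtain ⟨T', hT', d, hd⟩ := hR₀ S' χ' (fun i => le_of_eq (hS'card i).symm)
      refine ⟨Fin.snoc T' Tl, ?_, d, ?_⟩
      · intro i
        refine Fin.lastCases ?_ (fun i => ?_) i
        · rw [Fin.snoc_last]; exact ⟨hTlsub, hTlcard⟩
        · rw [Fin.snoc_castSucc]; exact ⟨(hT' i).1.trans (hS'sub i), (hT' i).2⟩
      · intro t ht
        have htl : t (Fin.last n) ⊆ Tl ∧ (t (Fin.last n)).card = j (Fin.last n) := by
          have := ht (Fin.last n); rwa [Fin.snoc_last] at this
        have htc : ∀ i : Fin n, t i.castSucc ⊆ T' i ∧ (t i.castSucc).card = j i.castSucc := by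
          intro i; have := ht i.castSucc; rwa [Fin.snoc_castSucc] at this
        have hmem : ∀ i : Fin n, t i.castSucc ∈ (S' i).powerset := fun i =>
          mem_powerset.2 ((htc i).1.trans (hT' i).1)
        have h1 : F (t (Fin.last n)) = g₀ := hg₀ _ htl.1 htl.2
        have h2 : χ' (Fin.init t) = d := hd _ (fun i => (htc i))
        have h3 : χ' (Fin.init t) = g₀ (fun i => ⟨t i.castSucc, hmem i⟩) := by
          rw [hχ']
          exact dif_pos hmem
        have h4 : F (t (Fin.last n)) (fun i => ⟨t i.castSucc, hmem i⟩) =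
            χ (Fin.snoc (Fin.init t) (t (Fin.last n))) := rfl
        rw [Fin.snoc_init_self] at h4
        rw [← h4, h1, ← h3, h2]
    · -- degenerate case: no subset of card `j (last)` inside a set of card `r`
      refine ⟨r, fun {β} S χ hS => ?_⟩
      have hpick : ∀ i : Fin (n + 1), ∃ s, s ⊆ S i ∧ s.card = r :=
        fun i => exists_subset_card_eq (hS i)
      choose T hTsub hTcard using hpick
      refine ⟨T, fun i => ⟨hTsub i, hTcard i⟩, ⟨0, hcpos⟩, fun t ht => ?_⟩
      exact absurd ((ht (Fin.last n)).2 ▸ Finset.card_le_card (ht (Fin.last n)).1)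
        (by rw [hTcard]; omega)

/-- Product Ramsey theorem: for every `n ≥ 1` and natural numbers `j₁,…,jₙ, c, r`
with `c ≠ 0`, there is `R` such that whenever `S₁,…,Sₙ` are finite sets with
`|Sᵢ| ≥ R` and `[S₁]^{j₁} × ⋯ × [Sₙ]^{jₙ} = Y₁ ∪ ⋯ ∪ Y_c`, there are
`Tᵢ ∈ [Sᵢ]^r` with `[T₁]^{j₁} × ⋯ × [Tₙ]^{jₙ} ⊆ Y_d` for some `d`. -/
theorem statement7 (n : ℕ) (hn : 1 ≤ n) (j : Fin n → ℕ) (c r : ℕ) (hc : c ≠ 0) :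
    ∃ R : ℕ, ∀ (β : Type*) (S : Fin n → Set β), (∀ i, (S i).Finite) →
      (∀ i, R ≤ (S i).ncard) →
      ∀ Y : Fin c → Set (Fin n → Set β),
        {t : Fin n → Set β | ∀ i, t i ⊆ S i ∧ (t i).Finite ∧ (t i).ncard = j i} =
          ⋃ d, Y d →
        ∃ T : Fin n → Set β,
          (∀ i, T i ⊆ S i ∧ (T i).Finite ∧ (T i).ncard = r) ∧
          ∃ d : Fin c,
            {t : Fin n → Set β | ∀ i, t i ⊆ T i ∧ (t i).Finite ∧ (t i).ncard = j i}
              ⊆ Y d := by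
  classical
  have hcpos : 0 < c := Nat.pos_of_ne_zero hc
  obtain ⟨R, hR⟩ := prodRamseyFinset n j c r hc
  refine ⟨R, fun β S hfin hcard Y hY => ?_⟩
  set Sf : Fin n → Finset β := fun i => (hfin i).toFinset with hSf
  have hSfcard : ∀ i, R ≤ (Sf i).card := by
    intro i
    show R ≤ (hfin i).toFinset.card
    rw [← Set.ncard_eq_toFinset_card _ (hfin i)]
    exact hcard i
  set χ : (Fin n → Finset β) → Fin c := fun u =>
    if h : (fun i => ((u i : Set β))) ∈ ⋃ d, Y d then (Set.mem_iUnion.1 h).choose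
    else ⟨0, hcpos⟩ with hχ
  have hχspec : ∀ u, ∀ h : (fun i => ((u i : Set β))) ∈ ⋃ d, Y d,
      (fun i => ((u i : Set β))) ∈ Y (χ u) := by
    intro u h
    show (fun i => ((u i : Set β))) ∈ Y (dite _ _ _)
    rw [dif_pos h]
    exact (Set.mem_iUnion.1 h).choose_spec
  obtain ⟨T, hT, d, hd⟩ := hR Sf χ hSfcard
  refine ⟨fun i => ↑(T i), fun i => ?_, d, fun t ht => ?_⟩
  · refine ⟨?_, (T i).finite_toSet, by rw [Set.ncard_coe_finset, (hT i).2]⟩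
    have := Finset.coe_subset.2 (hT i).1
    rwa [hSf, Set.Finite.coe_toFinset] at this
  · simp only [Set.mem_setOf_eq] at ht
    set tf : Fin n → Finset β := fun i => (ht i).2.1.toFinset with htf
    have hcoe : (fun i => ((tf i : Set β))) = t := by
      funext i
      rw [htf, Set.Finite.coe_toFinset]
    have htmem : t ∈ ⋃ d, Y d := by
      rw [← hY]
      refine fun i => ⟨(ht i).1.trans ?_, (ht i).2.1, (ht i).2.2⟩
      have := Finset.coe_subset.2 (hT i).1
      rwa [hSf, Set.Finite.coe_toFinset] at this
    have hχt : χ tf = d := by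
      refine hd tf fun i => ⟨?_, ?_⟩
      · rw [← Finset.coe_subset, htf, Set.Finite.coe_toFinset]
        exact (ht i).1
      · rw [← Set.ncard_coe_finset, htf, Set.Finite.coe_toFinset]
        exact (ht i).2.2
    have := hχspec tf (by rw [hcoe]; exact htmem)
    rwa [hχt, hcoe] at this
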